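/- arXiv:2211.02805 — 3 statements merged into one kernel-verified Lean document; each statement's English description precedes it below -/
import Mathlib

section
/- If problem (1.5) admits a positive classical solution on Ω, then k > c. -/
open Set Filter

noncomputable def vlap {N : ℕ} (f : EuclideanSpace ℝ (Fin N) → ℝ)
    (x : EuclideanSpace ℝ (Fin N)) : ℝ :=
  ∑ i : Fin N, fderiv ℝ (fun y => fderiv ℝ f y (EuclideanSpace.single i 1)) x
    (EuclideanSpace.single i 1)

/-- `f` is twice continuously differentiable in `Ω`, continuous on `closure Ω`,
strictly positive in `Ω` and vanishes on the boundary `frontier Ω`. -/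
def PosDirichlet {N : ℕ} (Ω : Set (EuclideanSpace ℝ (Fin N)))
    (f : EuclideanSpace ℝ (Fin N) → ℝ) : Prop :=
  ContDiffOn ℝ 2 f Ω ∧ ContinuousOn f (closure Ω) ∧ (∀ x ∈ Ω, 0 < f x) ∧
    ∀ x ∈ frontier Ω, f x = 0

lemma sd_nonpos {g g' : ℝ → ℝ} {A : ℝ}
    (hmax : IsLocalMax g 0)
    (hg : ∀ᶠ t in nhds (0:ℝ), HasDerivAt g (g' t) t)
    (hg' : HasDerivAt g' A 0) : A ≤ 0 := by
  by_contra hA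
  push_neg at hA
  have h0 : g' 0 = 0 := hmax.hasDerivAt_eq_zero hg.self_of_nhds
  have hs : Tendsto (slope g' 0) (nhdsWithin 0 {(0:ℝ)}ᶜ) (nhds A) :=
    hasDerivAt_iff_tendsto_slope.1 hg'
  have hpos : ∀ᶠ t in nhdsWithin 0 {(0:ℝ)}ᶜ, 0 < slope g' 0 t :=
    hs (Ioi_mem_nhds hA)
  -- combine into a ball
  have hcomb : ∀ᶠ t in nhdsWithin 0 {(0:ℝ)}ᶜ,
      0 < slope g' 0 t ∧ HasDerivAt g (g' t) t ∧ g t ≤ g 0 :=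
    hpos.and ((hg.and hmax).filter_mono nhdsWithin_le_nhds)
  rw [Filter.eventually_iff, Metric.mem_nhdsWithin_iff] at hcomb
  obtain ⟨ε, hε, hball⟩ := hcomb
  -- g is strictly mono on [0, ε/2]
  have hd0 : HasDerivAt g (g' 0) 0 := hg.self_of_nhds
  have key : ∀ t ∈ Icc (0:ℝ) (ε/2), t ≠ 0 →
      0 < slope g' 0 t ∧ HasDerivAt g (g' t) t ∧ g t ≤ g 0 := by
    intro t ht htne
    apply hball
    constructor
    · simp only [Metric.mem_ball, Real.dist_eq, sub_zero]
      rw [abs_of_nonneg ht.1]; linarith [ht.2]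
    · exact htne
  have hmono : StrictMonoOn g (Icc 0 (ε/2)) := by
    apply strictMonoOn_of_deriv_pos (convex_Icc _ _)
    · intro t ht
      by_cases htne : t = 0
      · exact (htne ▸ hd0.continuousAt).continuousWithinAt
      · exact ((key t ht htne).2.1).continuousAt.continuousWithinAt
    · intro t ht
      rw [interior_Icc] at ht
      have htne : t ≠ 0 := ne_of_gt ht.1
      obtain ⟨hsl, hder, _⟩ := key t (Ioo_subset_Icc_self ht) htne
      rw [hder.deriv]
      rw [slope_def_field, div_eq_inv_mul] at hsl
      have : 0 < (g' t - g' 0) / (t - 0) := by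
        rw [div_eq_inv_mul]; exact hsl
      rw [h0, sub_zero, sub_zero] at this
      rcases div_pos_iff.mp this with ⟨h, _⟩ | ⟨_, h2⟩
      · exact h
      · linarith [ht.1]
  have h1 : g 0 < g (ε/2) := hmono (by constructor <;> linarith) (by constructor <;> linarith) (by linarith)
  have h2 : g (ε/2) ≤ g 0 := (key (ε/2) (by constructor <;> linarith) (by linarith)).2.2
  linarith

lemma interior_max_vlap {N : ℕ} (Ω : Set (EuclideanSpace ℝ (Fin N)))
    (hΩopen : IsOpen Ω) (hΩne : Ω.Nonempty) (hΩbd : Bornology.IsBounded Ω)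
    (I : EuclideanSpace ℝ (Fin N) → ℝ)
    (hI2 : ContDiffOn ℝ 2 I Ω) (hIc : ContinuousOn I (closure Ω))
    (hIpos : ∀ x ∈ Ω, 0 < I x) (hIbd : ∀ x ∈ frontier Ω, I x = 0) :
    ∃ x₀ ∈ Ω, vlap I x₀ ≤ 0 := by
  obtain ⟨x₁, hx₁⟩ := hΩne
  have hcomp : IsCompact (closure Ω) := hΩbd.isCompact_closure
  obtain ⟨x₀, hx₀cl, hx₀max⟩ := hcomp.exists_isMaxOn ⟨x₁, subset_closure hx₁⟩ hIc
  have hx₀Ω : x₀ ∈ Ω := by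
    by_contra h
    have hfr : x₀ ∈ frontier Ω := by rw [hΩopen.frontier_eq]; exact ⟨hx₀cl, h⟩
    have h1 : I x₁ ≤ I x₀ := hx₀max (subset_closure hx₁)
    have h2 := hIbd x₀ hfr
    have h3 := hIpos x₁ hx₁
    linarith
  refine ⟨x₀, hx₀Ω, Finset.sum_nonpos fun i _ => ?_⟩
  set v := EuclideanSpace.single i (1:ℝ) with hv
  have hvn : ‖v‖ = 1 := by rw [hv, EuclideanSpace.norm_single]; norm_num
  obtain ⟨r, hr, hball⟩ := Metric.isOpen_iff.1 hΩopen x₀ hx₀Ω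
  set φ : ℝ → EuclideanSpace ℝ (Fin N) := fun t => x₀ + t • v with hφdef
  have hφ : ∀ t, HasDerivAt φ v t := by
    intro t
    have := ((hasDerivAt_id t).smul_const v).const_add x₀
    rw [one_smul] at this; exact this
  have hmem : ∀ t : ℝ, |t| < r → φ t ∈ Ω := by
    intro t ht
    apply hball
    simp only [Metric.mem_ball, hφdef, dist_eq_norm, add_sub_cancel_left, norm_smul, hvn,
      mul_one, Real.norm_eq_abs]
    exact ht
  have hCA : ∀ x ∈ Ω, ContDiffAt ℝ 2 I x := fun x hx => hI2.contDiffAt (hΩopen.mem_nhds hx)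
  have hdiffI : ∀ x ∈ Ω, DifferentiableAt ℝ I x := fun x hx =>
    (hCA x hx).differentiableAt (by norm_num)
  have hf' : ContDiffAt ℝ 1 (fderiv ℝ I) x₀ :=
    (hCA x₀ hx₀Ω).fderiv_right (by norm_num)
  have hdh : DifferentiableAt ℝ (fun y => fderiv ℝ I y v) x₀ :=
    (hf'.differentiableAt (by norm_num)).clm_apply (differentiableAt_const v)
  have hev : ∀ᶠ t in nhds (0:ℝ), |t| < r := by
    simpa using eventually_abs_sub_lt (0:ℝ) hr
  set g : ℝ → ℝ := fun t => I (φ t) with hgdef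
  set g' : ℝ → ℝ := fun t => fderiv ℝ I (φ t) v with hg'def
  have hg : ∀ᶠ t in nhds (0:ℝ), HasDerivAt g (g' t) t := by
    filter_upwards [hev] with t ht
    exact ((hdiffI (φ t) (hmem t ht)).hasFDerivAt).comp_hasDerivAt t (hφ t)
  have hφ0 : φ 0 = x₀ := by simp [hφdef]
  have hg'0 : HasDerivAt g' (fderiv ℝ (fun y => fderiv ℝ I y v) x₀ v) 0 := by
    have hh : HasFDerivAt (fun y => fderiv ℝ I y v)
        (fderiv ℝ (fun y => fderiv ℝ I y v) x₀) (φ 0) := by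
      rw [hφ0]; exact hdh.hasFDerivAt
    have := hh.comp_hasDerivAt 0 (hφ 0)
    exact this
  have hmax : IsLocalMax g 0 := by
    filter_upwards [hev] with t ht
    have : g t ≤ I x₀ := hx₀max (subset_closure (hmem t ht))
    simpa [hgdef, hφ0] using this
  exact sd_nonpos hmax hg hg'0

/-- If problem (1.5) admits a positive classical solution on Ω, then k > c. -/
theorem stmt1 {N : ℕ} (hN : 1 ≤ N) (Ω : Set (EuclideanSpace ℝ (Fin N)))
    (hΩopen : IsOpen Ω) (hΩconn : IsConnected Ω) (hΩbd : Bornology.IsBounded Ω)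
    (a b c k d : ℝ) (ha : 0 < a) (hb : 0 < b) (hc : 0 < c) (hk : 0 < k) (hd : 0 < d)
    (hab : b < a)
    (S I : EuclideanSpace ℝ (Fin N) → ℝ)
    (hS : PosDirichlet Ω S) (hI : PosDirichlet Ω I)
    (heqS : ∀ x ∈ Ω, -d * vlap S x
      = a * (S x + I x) - b * S x - c * (S x + I x) * S x - k * S x * I x)
    (heqI : ∀ x ∈ Ω, -d * vlap I x
      = k * S x * I x - b * I x - c * (S x + I x) * I x) :
    c < k := by
  obtain ⟨hI2, hIc, hIpos, hIbd⟩ := hI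
  obtain ⟨hS2, hSc, hSpos, hSbd⟩ := hS
  obtain ⟨x₀, hx₀Ω, hlap⟩ := interior_max_vlap Ω hΩopen hΩconn.nonempty hΩbd I hI2 hIc hIpos hIbd
  have heq := heqI x₀ hx₀Ω
  have h1 : 0 ≤ -d * vlap I x₀ := mul_nonneg_of_nonpos_of_nonpos (by linarith : -d ≤ 0) hlap
  have hSx := hSpos x₀ hx₀Ω
  have hIx := hIpos x₀ hx₀Ω
  by_contra hkc
  push_neg at hkc
  have h2 : k * S x₀ * I x₀ ≤ c * S x₀ * I x₀ :=
    mul_le_mul_of_nonneg_right (mul_le_mul_of_nonneg_right hkc hSx.le) hIx.le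
  nlinarith [mul_pos hIx hIx, mul_pos hb hIx, mul_pos (mul_pos hc hSx) hIx]
end

section
/- Suppose (S, I, P) is a positive classical solution of problem (1.3) on Ω. Then k > c, and the pair (u, P) with u := S + I is a positive classical solution of problem (1.6). -/
open Set

section Aux

open Filter

lemma diff_fderiv_apply' {N : ℕ} {Ω : Set (EuclideanSpace ℝ (Fin N))} (hΩ : IsOpen Ω)
    {f : EuclideanSpace ℝ (Fin N) → ℝ} (hf : ContDiffOn ℝ 2 f Ω)
    {x : EuclideanSpace ℝ (Fin N)} (hx : x ∈ Ω) (v : EuclideanSpace ℝ (Fin N)) :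
    DifferentiableAt ℝ (fun y => fderiv ℝ f y v) x := by
  have h1 : ContDiffAt ℝ 2 f x := hf.contDiffAt (hΩ.mem_nhds hx)
  have h2 : ContDiffAt ℝ 1 (fderiv ℝ f) x := h1.fderiv_right (by norm_num)
  exact (h2.differentiableAt (by norm_num)).clm_apply (differentiableAt_const v)

lemma vlap_add' {N : ℕ} {Ω : Set (EuclideanSpace ℝ (Fin N))} (hΩ : IsOpen Ω)
    {f g : EuclideanSpace ℝ (Fin N) → ℝ} (hf : ContDiffOn ℝ 2 f Ω) (hg : ContDiffOn ℝ 2 g Ω)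
    {x : EuclideanSpace ℝ (Fin N)} (hx : x ∈ Ω) :
    vlap (fun y => f y + g y) x = vlap f x + vlap g x := by
  unfold vlap
  rw [← Finset.sum_add_distrib]
  refine Finset.sum_congr rfl fun i _ => ?_
  set v := EuclideanSpace.single (𝕜 := ℝ) i (1:ℝ) with hv
  have heq : (fun y => fderiv ℝ (fun z => f z + g z) y v)
      =ᶠ[nhds x] (fun y => fderiv ℝ f y v + fderiv ℝ g y v) := by
    filter_upwards [hΩ.mem_nhds hx] with y hy
    have hfd : DifferentiableAt ℝ f y :=
      (hf.contDiffAt (hΩ.mem_nhds hy)).differentiableAt (by norm_num)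
    have hgd : DifferentiableAt ℝ g y :=
      (hg.contDiffAt (hΩ.mem_nhds hy)).differentiableAt (by norm_num)
    rw [fderiv_fun_add hfd hgd]
    rfl
  rw [heq.fderiv_eq, fderiv_fun_add (diff_fderiv_apply' hΩ hf hx v) (diff_fderiv_apply' hΩ hg hx v)]
  rfl

lemma secondDeriv_nonpos_at_max {N : ℕ} {Ω : Set (EuclideanSpace ℝ (Fin N))} (hΩ : IsOpen Ω)
    {f : EuclideanSpace ℝ (Fin N) → ℝ} (hf : ContDiffOn ℝ 2 f Ω)
    {x : EuclideanSpace ℝ (Fin N)} (hx : x ∈ Ω) (hmax : IsLocalMax f x)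
    (v : EuclideanSpace ℝ (Fin N)) :
    fderiv ℝ (fun y => fderiv ℝ f y v) x v ≤ 0 := by
  set φ : ℝ → EuclideanSpace ℝ (Fin N) := fun t => x + t • v with hφdef
  have hφ0 : φ 0 = x := by simp [hφdef]
  have hφderiv : ∀ t : ℝ, HasDerivAt φ v t := by
    intro t
    have : HasDerivAt (fun s : ℝ => s • v) ((1:ℝ) • v) t := (hasDerivAt_id t).smul_const v
    have h' := this.const_add x
    rw [one_smul] at h'
    exact h'
  have hφcont : Continuous φ := by
    have : ∀ t, ContinuousAt φ t := fun t => (hφderiv t).continuousAt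
    exact continuous_iff_continuousAt.2 this
  set U : Set ℝ := φ ⁻¹' Ω with hUdef
  have hUopen : IsOpen U := hΩ.preimage hφcont
  have h0U : (0:ℝ) ∈ U := by simp [hUdef, hφ0, hx]
  set g : ℝ → ℝ := fun t => f (φ t) with hgdef
  set h : ℝ → ℝ := fun t => fderiv ℝ f (φ t) v with hhdef
  have hg' : ∀ t ∈ U, HasDerivAt g (h t) t := by
    intro t ht
    have hfd : DifferentiableAt ℝ f (φ t) :=
      (hf.contDiffAt (hΩ.mem_nhds ht)).differentiableAt (by norm_num)
    exact hfd.hasFDerivAt.comp_hasDerivAt t (hφderiv t)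
  set m : ℝ := fderiv ℝ (fun y => fderiv ℝ f y v) x v with hmdef
  have hh' : HasDerivAt h m 0 := by
    have hFd : DifferentiableAt ℝ (fun y => fderiv ℝ f y v) x :=
      diff_fderiv_apply' hΩ hf hx v
    have hFd' : HasFDerivAt (fun y => fderiv ℝ f y v)
        (fderiv ℝ (fun y => fderiv ℝ f y v) x) (φ 0) := by
      rw [hφ0]; exact hFd.hasFDerivAt
    have := hFd'.comp_hasDerivAt 0 (hφderiv 0)
    exact this
  have hgmax : IsLocalMax g 0 := by
    have ht : Filter.Tendsto φ (nhds 0) (nhds x) := by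
      rw [← hφ0]; exact hφcont.continuousAt
    have h1 : ∀ᶠ t in nhds (0:ℝ), f (φ t) ≤ f x := ht.eventually hmax
    refine h1.mono fun t htle => ?_
    simpa [hgdef, hφ0] using htle
  have hh0 : h 0 = 0 := hgmax.hasDerivAt_eq_zero (hg' 0 h0U)
  by_contra hpos
  push_neg at hpos
  have hslope : Tendsto (slope h 0) (nhdsWithin 0 {(0:ℝ)}ᶜ) (nhds m) :=
    hasDerivAt_iff_tendsto_slope.1 hh'
  have hev : ∀ᶠ t in nhdsWithin 0 {(0:ℝ)}ᶜ, 0 < slope h 0 t :=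
    hslope.eventually (eventually_gt_nhds hpos)
  have hle : nhdsWithin (0:ℝ) (Ioi 0) ≤ nhdsWithin 0 {(0:ℝ)}ᶜ :=
    nhdsWithin_mono 0 (fun t ht => ne_of_gt ht)
  have hev1 : ∀ᶠ t in nhdsWithin (0:ℝ) (Ioi 0), 0 < h t := by
    filter_upwards [hle hev, self_mem_nhdsWithin] with t h1 h2
    have : slope h 0 t = h t / t := by simp [slope_def_field, hh0]
    rw [this] at h1
    have ht0 : (0:ℝ) < t := h2
    have := mul_pos h1 ht0
    rwa [div_mul_cancel₀] at this
    exact ne_of_gt ht0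
  have hev2 : ∀ᶠ t in nhdsWithin (0:ℝ) (Ioi 0), t ∈ U :=
    mem_nhdsWithin_of_mem_nhds (hUopen.mem_nhds h0U)
  have hev3 : ∀ᶠ t in nhdsWithin (0:ℝ) (Ioi 0), g t ≤ g 0 :=
    mem_nhdsWithin_of_mem_nhds hgmax
  obtain ⟨u, hu, hsub⟩ := mem_nhdsGT_iff_exists_Ioo_subset.1
    ((hev1.and (hev2.and hev3)) : _)
  have hu0 : (0:ℝ) < u := hu
  set δ : ℝ := u / 2 with hδdef
  have hδ0 : 0 < δ := by positivity
  have hδu : δ < u := by linarith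
  have hIccU : Icc (0:ℝ) δ ⊆ U := by
    intro t ht
    rcases eq_or_lt_of_le ht.1 with rfl | htpos
    · exact h0U
    · exact (hsub ⟨htpos, lt_of_le_of_lt ht.2 hδu⟩).2.1
  have hgcont : ContinuousOn g (Icc 0 δ) := by
    intro t ht
    exact ((hg' t (hIccU ht)).continuousAt).continuousWithinAt
  have hderivpos : ∀ t ∈ interior (Icc (0:ℝ) δ), 0 < deriv g t := by
    intro t ht
    rw [interior_Icc] at ht
    have htm : t ∈ Ioo 0 u := ⟨ht.1, lt_trans ht.2 hδu⟩
    rw [(hg' t (hsub htm).2.1).deriv]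
    exact (hsub htm).1
  have hmono : StrictMonoOn g (Icc 0 δ) :=
    strictMonoOn_of_deriv_pos (convex_Icc 0 δ) hgcont hderivpos
  have h1 : g 0 < g δ := hmono (left_mem_Icc.2 (le_of_lt hδ0)) (right_mem_Icc.2 (le_of_lt hδ0)) hδ0
  have h2 : g δ ≤ g 0 := (hsub ⟨hδ0, hδu⟩).2.2
  linarith

end Aux

/-- If (S, I, P) is a positive classical solution of (1.3), then k > c and
(S + I, P) is a positive classical solution of (1.6). -/
theorem stmt9 {N : ℕ} (hN : 1 ≤ N) (Ω : Set (EuclideanSpace ℝ (Fin N)))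
    (hΩopen : IsOpen Ω) (hΩconn : IsConnected Ω) (hΩbd : Bornology.IsBounded Ω)
    (a b c k el th rh d D : ℝ) (ha : 0 < a) (hb : 0 < b) (hc : 0 < c) (hk : 0 < k)
    (hel : 0 < el) (hth : 0 < th) (hrh : 0 < rh) (hd : 0 < d) (hD : 0 < D) (hab : b < a)
    (S I P : EuclideanSpace ℝ (Fin N) → ℝ)
    (hS : PosDirichlet Ω S) (hI : PosDirichlet Ω I) (hP : PosDirichlet Ω P)
    (heqS : ∀ x ∈ Ω, -d * vlap S x
      = a * (S x + I x) - b * S x - c * (S x + I x) * S x - k * S x * I x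
        - el * S x * P x)
    (heqI : ∀ x ∈ Ω, -d * vlap I x
      = k * S x * I x - b * I x - c * (S x + I x) * I x - el * I x * P x)
    (heqP : ∀ x ∈ Ω, -D * vlap P x = th * (S x + I x) * P x - rh * P x) :
    c < k ∧
    PosDirichlet Ω (fun x => S x + I x) ∧ PosDirichlet Ω P ∧
    (∀ x ∈ Ω, -d * vlap (fun x => S x + I x) x
      = (a - b) * (S x + I x) - c * (S x + I x) ^ 2 - el * (S x + I x) * P x) ∧
    (∀ x ∈ Ω, -D * vlap P x = th * (S x + I x) * P x - rh * P x) := by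
  obtain ⟨z, hz⟩ := hΩconn.nonempty
  -- `c < k` via the maximum principle applied to `I`.
  have hck : c < k := by
    by_contra hkc
    push_neg at hkc  -- k ≤ c
    have hcomp : IsCompact (closure Ω) :=
      Metric.isCompact_of_isClosed_isBounded isClosed_closure hΩbd.closure
    obtain ⟨x₀, hx₀cl, hmaxon⟩ :=
      hcomp.exists_isMaxOn (hΩconn.nonempty.mono subset_closure) hI.2.1
    have hx₀Ω : x₀ ∈ Ω := by
      by_contra hxn
      have hfr : x₀ ∈ frontier Ω := by
        rw [frontier, hΩopen.interior_eq]
        exact ⟨hx₀cl, hxn⟩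
      have h0 : I x₀ = 0 := hI.2.2.2 x₀ hfr
      have : I z ≤ I x₀ := hmaxon (subset_closure hz)
      have := hI.2.2.1 z hz
      linarith
    have hlocmax : IsLocalMax I x₀ := by
      filter_upwards [hΩopen.mem_nhds hx₀Ω] with y hy
      exact hmaxon (subset_closure hy)
    have hvlap : vlap I x₀ ≤ 0 := by
      unfold vlap
      exact Finset.sum_nonpos fun i _ =>
        secondDeriv_nonpos_at_max hΩopen hI.1 hx₀Ω hlocmax _
    have hLHS : 0 ≤ -d * vlap I x₀ := by nlinarith
    have heq := heqI x₀ hx₀Ω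
    have hSp := hS.2.2.1 x₀ hx₀Ω
    have hIp := hI.2.2.1 x₀ hx₀Ω
    have hPp := hP.2.2.1 x₀ hx₀Ω
    have p1 : 0 ≤ (c - k) * (S x₀ * I x₀) :=
      mul_nonneg (by linarith) (le_of_lt (mul_pos hSp hIp))
    have p2 : 0 < b * I x₀ := mul_pos hb hIp
    have p3 : 0 < c * (I x₀ * I x₀) := mul_pos hc (mul_pos hIp hIp)
    have p4 : 0 < el * (I x₀ * P x₀) := mul_pos hel (mul_pos hIp hPp)
    nlinarith [hLHS, heq, p1, p2, p3, p4]
  refine ⟨hck, ?_, hP, ?_, heqP⟩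
  · refine ⟨hS.1.add hI.1, hS.2.1.add hI.2.1, fun x hx => ?_, fun x hx => ?_⟩
    · exact add_pos (hS.2.2.1 x hx) (hI.2.2.1 x hx)
    · show S x + I x = 0
      rw [hS.2.2.2 x hx, hI.2.2.2 x hx, add_zero]
  · intro x hx
    rw [vlap_add' hΩopen hS.1 hI.1 hx]
    linear_combination heqS x hx + heqI x hx
end

section
/- Let Ω ⊂ ℝ^N be a nonempty bounded open convex set and let ṽ > 0 be a constant. Suppose v : Ω̄ × [0, ∞) → ℝ is such that for each t ≥ 0 the function v(·, t) is continuous on Ω̄, continuously differentiable in Ω, and strictly positive on Ω̄. If ∫_Ω ( v(x,t) − ṽ − ṽ·ln(v(x,t)/ṽ) ) dx → 0 as t → ∞ and sup_{x ∈ Ω} |∇_x v(x,t)| → 0 as t → ∞, then ∫_Ω | v(x,t) − ṽ | dx → 0 as t → ∞. -/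
open Set Filter Topology MeasureTheory

noncomputable def entf (vt w : ℝ) : ℝ := w - vt - vt * Real.log (w / vt)

lemma entf_self {vt : ℝ} (hvt : 0 < vt) : entf vt vt = 0 := by
  simp [entf, div_self hvt.ne']

lemma entf_nonneg {vt w : ℝ} (hvt : 0 < vt) (hw : 0 < w) : 0 ≤ entf vt w := by
  have h := Real.log_le_sub_one_of_pos (div_pos hw hvt)
  have h2 : vt * Real.log (w / vt) ≤ vt * (w / vt - 1) :=
    mul_le_mul_of_nonneg_left h hvt.le
  have h3 : vt * (w / vt - 1) = w - vt := by field_simp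
  simp only [entf]; linarith [h3 ▸ h2]

lemma entf_pos {vt w : ℝ} (hvt : 0 < vt) (hw : 0 < w) (hne : w ≠ vt) : 0 < entf vt w := by
  have hne1 : w / vt ≠ 1 := by
    intro h; exact hne (by field_simp at h; linarith)
  have h := Real.log_lt_sub_one_of_pos (div_pos hw hvt) hne1
  have h2 : vt * Real.log (w / vt) < vt * (w / vt - 1) :=
    mul_lt_mul_of_pos_left h hvt
  have h3 : vt * (w / vt - 1) = w - vt := by field_simp
  simp only [entf]; linarith [h3 ▸ h2]

lemma entf_convex {vt : ℝ} (hvt : 0 < vt) : ConvexOn ℝ (Ioi 0) (entf vt) := by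
  refine ⟨convex_Ioi 0, fun x hx y hy a b ha hb hab => ?_⟩
  simp only [entf, smul_eq_mul]
  have hx0 : (0:ℝ) < x := hx
  have hy0 : (0:ℝ) < y := hy
  have hxvt : x / vt ∈ Ioi (0:ℝ) := div_pos hx0 hvt
  have hyvt : y / vt ∈ Ioi (0:ℝ) := div_pos hy0 hvt
  have hlog := strictConcaveOn_log_Ioi.concaveOn.2 hxvt hyvt ha hb hab
  simp only [smul_eq_mul] at hlog
  have heq : a * (x / vt) + b * (y / vt) = (a * x + b * y) / vt := by ring
  rw [heq] at hlog
  have := mul_le_mul_of_nonneg_left hlog hvt.le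
  nlinarith [this]

/-- Csiszár–Kullback type pointwise bound. -/
lemma entf_key {vt δ w : ℝ} (hvt : 0 < vt) (hδ : 0 < δ) (hδvt : δ < vt) (hw : 0 < w) :
    |w - vt| ≤ δ + entf vt w / (min (entf vt (vt - δ)) (entf vt (vt + δ)) / δ) := by
  set c := min (entf vt (vt - δ)) (entf vt (vt + δ)) / δ with hcdef
  have hc : 0 < c := div_pos (lt_min
    (entf_pos hvt (by linarith) (by linarith))
    (entf_pos hvt (by linarith) (by linarith))) hδ
  have hfnn : 0 ≤ entf vt w := entf_nonneg hvt hw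
  by_cases h : |w - vt| ≤ δ
  · have h0 : 0 ≤ entf vt w / c := by positivity
    linarith
  · push_neg at h
    have key : c * |w - vt| ≤ entf vt w := by
      have hne : w ≠ vt := by
        intro he; rw [he, sub_self, abs_zero] at h; linarith
      rcases lt_or_gt_of_ne hne with hlt | hgt
      · -- w < vt, and vt - w > δ
        have habs : |w - vt| = vt - w := by rw [abs_of_neg (by linarith)]; ring
        rw [habs] at h ⊢
        have hvw : 0 < vt - w := by linarith
        set a := δ / (vt - w) with hadef
        set b := (vt - w - δ) / (vt - w) with hbdef
        have ha : 0 ≤ a := by positivity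
        have hb : 0 ≤ b := by apply div_nonneg <;> linarith
        have hab : a + b = 1 := by rw [hadef, hbdef]; field_simp; ring
        have hcomb : a • w + b • vt = vt - δ := by
          simp only [smul_eq_mul, hadef, hbdef]; field_simp; ring
        have := (entf_convex hvt).2 (mem_Ioi.mpr hw) (mem_Ioi.mpr hvt) ha hb hab
        rw [hcomb, entf_self hvt, smul_eq_mul, smul_eq_mul, mul_zero, add_zero] at this
        -- entf vt (vt - δ) ≤ (δ/(vt-w)) * entf vt w
        have h1 : c ≤ entf vt (vt - δ) / δ := by
          rw [hcdef]; gcongr; exact min_le_left _ _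
        have h2 : entf vt (vt - δ) * (vt - w) ≤ δ * entf vt w := by
          have := mul_le_mul_of_nonneg_right this hvw.le
          rw [hadef] at this
          field_simp at this
          nlinarith [this]
        calc c * (vt - w) ≤ (entf vt (vt - δ) / δ) * (vt - w) := by
              apply mul_le_mul_of_nonneg_right h1; linarith
          _ ≤ entf vt w := by rw [div_mul_eq_mul_div, div_le_iff₀ hδ]; nlinarith [h2]
      · -- w > vt, w - vt > δ
        have habs : |w - vt| = w - vt := abs_of_pos (by linarith)
        rw [habs] at h ⊢
        have hvw : 0 < w - vt := by linarith
        set a := (w - vt - δ) / (w - vt) with hadef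
        set b := δ / (w - vt) with hbdef
        have ha : 0 ≤ a := by apply div_nonneg <;> linarith
        have hb : 0 ≤ b := by positivity
        have hab : a + b = 1 := by rw [hadef, hbdef]; field_simp; ring
        have hcomb : a • vt + b • w = vt + δ := by
          simp only [smul_eq_mul, hadef, hbdef]; field_simp; ring
        have := (entf_convex hvt).2 (mem_Ioi.mpr hvt) (mem_Ioi.mpr hw) ha hb hab
        rw [hcomb, entf_self hvt, smul_eq_mul, smul_eq_mul, mul_zero, zero_add] at this
        have h1 : c ≤ entf vt (vt + δ) / δ := by
          rw [hcdef]; gcongr; exact min_le_right _ _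
        have h2 : entf vt (vt + δ) * (w - vt) ≤ δ * entf vt w := by
          have := mul_le_mul_of_nonneg_right this hvw.le
          rw [hbdef] at this
          field_simp at this
          nlinarith [this]
        calc c * (w - vt) ≤ (entf vt (vt + δ) / δ) * (w - vt) := by
              apply mul_le_mul_of_nonneg_right h1; linarith
          _ ≤ entf vt w := by rw [div_mul_eq_mul_div, div_le_iff₀ hδ]; nlinarith [h2]
    have : |w - vt| ≤ entf vt w / c := (le_div_iff₀ hc).mpr (by linarith [key, mul_comm c |w - vt|])
    linarith

/-- If the entropy functional ∫_Ω (v - ṽ - ṽ ln(v/ṽ)) tends to 0 and the gradient of v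
tends uniformly to 0, then ∫_Ω |v - ṽ| tends to 0. -/
theorem stmt18 {N : ℕ} (Ω : Set (EuclideanSpace ℝ (Fin N)))
    (hΩopen : IsOpen Ω) (hΩne : Ω.Nonempty) (hΩbd : Bornology.IsBounded Ω)
    (hΩconv : Convex ℝ Ω)
    (vt : ℝ) (hvt : 0 < vt)
    (v : EuclideanSpace ℝ (Fin N) → ℝ → ℝ)
    (hvcont : ∀ t ≥ (0 : ℝ), ContinuousOn (fun x => v x t) (closure Ω))
    (hvreg : ∀ t ≥ (0 : ℝ), ContDiffOn ℝ 1 (fun x => v x t) Ω)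
    (hvpos : ∀ t ≥ (0 : ℝ), ∀ x ∈ closure Ω, 0 < v x t)
    (hent : Tendsto (fun t => ∫ x in Ω, (v x t - vt - vt * Real.log (v x t / vt)))
      atTop (𝓝 0))
    (hgrad : Tendsto (fun t => sSup ((fun x => ‖fderiv ℝ (fun y => v y t) x‖) '' Ω))
      atTop (𝓝 0)) :
    Tendsto (fun t => ∫ x in Ω, |v x t - vt|) atTop (𝓝 0) := by
  have hK : IsCompact (closure Ω) :=
    Metric.isCompact_of_isClosed_isBounded isClosed_closure hΩbd.closure
  have hΩfin : volume Ω < ⊤ := hΩbd.measure_lt_top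
  set m : ℝ := (volume Ω).toReal with hmdef
  have hm : 0 ≤ m := ENNReal.toReal_nonneg
  rw [Metric.tendsto_nhds]
  intro ε hε
  -- choose δ
  set δ : ℝ := min (vt / 2) (ε / (2 * (m + 1))) with hδdef
  have hδpos : 0 < δ := lt_min (by linarith) (by positivity)
  have hδvt : δ < vt := lt_of_le_of_lt (min_le_left _ _) (by linarith)
  have hδm : δ * m < ε / 2 := by
    have h1 : δ ≤ ε / (2 * (m + 1)) := min_le_right _ _
    have h2 : δ * m ≤ ε / (2 * (m + 1)) * m := mul_le_mul_of_nonneg_right h1 hm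
    have h3 : ε / (2 * (m + 1)) * m < ε / 2 := by
      rw [div_mul_eq_mul_div, div_lt_div_iff₀ (by positivity) (by norm_num)]
      nlinarith
    linarith
  set c : ℝ := min (entf vt (vt - δ)) (entf vt (vt + δ)) / δ with hcdef
  have hc : 0 < c := div_pos (lt_min
    (entf_pos hvt (by linarith) (by linarith))
    (entf_pos hvt (by linarith) (by linarith))) hδpos
  have hEtend := Metric.tendsto_nhds.mp hent (c * (ε / 2)) (by positivity)
  filter_upwards [hEtend, eventually_ge_atTop (0 : ℝ)] with t hEt ht
  -- integrability facts
  have hvc := hvcont t ht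
  have hfcont : ContinuousOn (fun x => entf vt (v x t)) (closure Ω) := by
    simp only [entf]
    exact (hvc.sub continuousOn_const).sub (continuousOn_const.mul
      ((hvc.div_const vt).log (fun x hx => (div_pos (hvpos t ht x hx) hvt).ne')))
  have hint_f : IntegrableOn (fun x => entf vt (v x t)) Ω volume :=
    (hfcont.integrableOn_compact hK).mono_set subset_closure
  have hint_abs : IntegrableOn (fun x => |v x t - vt|) Ω volume :=
    (((hvc.sub continuousOn_const).abs).integrableOn_compact hK).mono_set subset_closure
  have hint_rhs : IntegrableOn (fun x => δ + entf vt (v x t) / c) Ω volume :=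
    (integrableOn_const hΩfin.ne).add (hint_f.div_const c)
  -- pointwise bound and integral comparison
  have hmono : ∫ x in Ω, |v x t - vt| ≤ ∫ x in Ω, (δ + entf vt (v x t) / c) := by
    refine setIntegral_mono_on hint_abs hint_rhs hΩopen.measurableSet (fun x hx => ?_)
    rw [hcdef]
    exact entf_key hvt hδpos hδvt (hvpos t ht x (subset_closure hx))
  have hrhs : ∫ x in Ω, (δ + entf vt (v x t) / c)
      = δ * m + (∫ x in Ω, entf vt (v x t)) / c := by
    rw [integral_add (integrableOn_const (C := δ) hΩfin.ne) (hint_f.div_const c),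
      setIntegral_const, integral_div, smul_eq_mul, mul_comm, measureReal_def, ← hmdef]
  have hInn : 0 ≤ ∫ x in Ω, |v x t - vt| :=
    setIntegral_nonneg hΩopen.measurableSet (fun x _ => abs_nonneg _)
  have hE : (∫ x in Ω, entf vt (v x t)) < c * (ε / 2) := by
    have : dist (∫ x in Ω, (v x t - vt - vt * Real.log (v x t / vt))) 0 < c * (ε / 2) := hEt
    rw [Real.dist_eq, sub_zero] at this
    calc (∫ x in Ω, entf vt (v x t))
        = ∫ x in Ω, (v x t - vt - vt * Real.log (v x t / vt)) := rfl
      _ ≤ |∫ x in Ω, (v x t - vt - vt * Real.log (v x t / vt))| := le_abs_self _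
      _ < c * (ε / 2) := this
  have hEc : (∫ x in Ω, entf vt (v x t)) / c < ε / 2 :=
    (div_lt_iff₀ hc).mpr (by linarith [mul_comm c (ε / 2)])
  rw [Real.dist_eq, sub_zero, abs_of_nonneg hInn]
  calc ∫ x in Ω, |v x t - vt| ≤ δ * m + (∫ x in Ω, entf vt (v x t)) / c := by
        rw [← hrhs]; exact hmono
    _ < ε := by linarith
end
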